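/- Let α₀, δ be coprime Gaussian integers with δ = c + di, gcd(c,d) = 1, and α_k = α₀ + k·δ. If 7 does not divide any element of the sequence (α_k), then for every k ∈ ℤ, among the eight consecutive Gaussian integers α_{k+1}, …, α_{k+8} there is at least one that is coprime to all the others. -/

import Mathlib

open GaussianInt Zsqrtd

private lemma gi_cover : ∀ (a : ZMod 2) (b : ZMod 3) (c d : ZMod 5),
    ∃ j ∈ Finset.Icc (1:ℤ) 8,
      (¬((j : ZMod 2) = a ∧ ∃ j' ∈ Finset.Icc (1:ℤ) 8, j' ≠ j ∧ (j' : ZMod 2) = a)) ∧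
      (¬((j : ZMod 3) = b ∧ ∃ j' ∈ Finset.Icc (1:ℤ) 8, j' ≠ j ∧ (j' : ZMod 3) = b)) ∧
      (¬((j : ZMod 5) = c ∧ ∃ j' ∈ Finset.Icc (1:ℤ) 8, j' ≠ j ∧ (j' : ZMod 5) = c)) ∧
      (¬((j : ZMod 5) = d ∧ ∃ j' ∈ Finset.Icc (1:ℤ) 8, j' ≠ j ∧ (j' : ZMod 5) = d)) := by
  intro a b c d
  revert a b c d
  decide

private lemma gi_irred_of_norm {x : GaussianInt} (hx : (Zsqrtd.norm x).natAbs.Prime) :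
    Irreducible x := by
  constructor
  · intro hu
    exact Nat.not_prime_one (Zsqrtd.norm_eq_one_iff.mpr hu ▸ hx)
  · intro a b hab
    have h1 : (Zsqrtd.norm a).natAbs * (Zsqrtd.norm b).natAbs = (Zsqrtd.norm x).natAbs := by
      rw [hab, Zsqrtd.norm_mul, Int.natAbs_mul]
    rcases hx.eq_one_or_self_of_dvd (Zsqrtd.norm a).natAbs ⟨_, h1.symm⟩ with hA | hA
    · exact Or.inl (Zsqrtd.norm_eq_one_iff.mp hA)
    · refine Or.inr (Zsqrtd.norm_eq_one_iff.mp ?_)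
      have hpos : 0 < (Zsqrtd.norm x).natAbs := hx.pos
      rw [hA] at h1
      nlinarith [hx.pos]

set_option synthInstance.maxHeartbeats 1000000 in
private lemma gi_exists_prime {x y : GaussianInt} (hxy : ¬ IsCoprime x y) :
    ∃ p : GaussianInt, Prime p ∧ p ∣ x ∧ p ∣ y := by
  classical
  have hgu : ¬ IsUnit (EuclideanDomain.gcd x y) := fun hu =>
    hxy (EuclideanDomain.gcd_isUnit_iff.mp hu)
  by_cases hg0 : EuclideanDomain.gcd x y = 0
  · obtain ⟨hx0, hy0⟩ := EuclideanDomain.gcd_eq_zero_iff.mp hg0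
    refine ⟨⟨1,2⟩, ?_, hx0 ▸ dvd_zero _, hy0 ▸ dvd_zero _⟩
    exact (_root_.irreducible_iff_prime).mp (gi_irred_of_norm (by norm_num [Zsqrtd.norm]))
  · obtain ⟨p, hpi, hpd⟩ := WfDvdMonoid.exists_irreducible_factor hgu hg0
    exact ⟨p, (_root_.irreducible_iff_prime).mp hpi,
      hpd.trans (EuclideanDomain.gcd_dvd_left x y),
      hpd.trans (EuclideanDomain.gcd_dvd_right x y)⟩

private lemma gi_norm_dvd {q x : GaussianInt} (h : q ∣ x) : Zsqrtd.norm q ∣ Zsqrtd.norm x := by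
  obtain ⟨c, rfl⟩ := h
  rw [Zsqrtd.norm_mul]
  exact dvd_mul_right _ _

theorem eight_consecutive_without_seven (α₀ δ : GaussianInt) (h : IsCoprime α₀ δ)
    (hδ : Int.gcd δ.re δ.im = 1)
    (h7 : ∀ k : ℤ, ¬ (7 : GaussianInt) ∣ α₀ + (k : GaussianInt) * δ) (k : ℤ) :
    ∃ j ∈ Finset.Icc (1 : ℤ) 8, ∀ j' ∈ Finset.Icc (1 : ℤ) 8, j' ≠ j →
      IsCoprime (α₀ + ((k + j : ℤ) : GaussianInt) * δ)
        (α₀ + ((k + j' : ℤ) : GaussianInt) * δ) := by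
  by_contra hcon
  push_neg at hcon
  set A : ℤ → GaussianInt := fun t => α₀ + (t : GaussianInt) * δ with hA
  -- coprimality with δ
  have hcop : ∀ t : ℤ, IsCoprime (A t) δ := fun t => h.add_mul_right_left _
  -- common divisor divides difference of indices
  have hdiff : ∀ (q : GaussianInt) (i i' : ℤ), q ∣ A i → q ∣ A i' →
      q ∣ ((i - i' : ℤ) : GaussianInt) := by
    intro q i i' h1 h2
    have h3 : q ∣ A i - A i' := dvd_sub h1 h2
    have h4 : A i - A i' = ((i - i' : ℤ) : GaussianInt) * δ := by
      simp only [hA]; push_cast; ring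
    rw [h4] at h3
    exact (((hcop i).of_isCoprime_of_dvd_left h1)).dvd_of_dvd_mul_right h3
  -- the relevant primes
  set q2 : GaussianInt := ⟨1, 1⟩ with hq2
  set q5 : GaussianInt := ⟨1, 2⟩ with hq5
  set q5' : GaussianInt := ⟨1, -2⟩ with hq5'
  have hq2i : Irreducible q2 := gi_irred_of_norm (by norm_num [Zsqrtd.norm, hq2])
  have hq5i : Irreducible q5 := gi_irred_of_norm (by norm_num [Zsqrtd.norm, hq5])
  have hq5'i : Irreducible q5' := gi_irred_of_norm (by norm_num [Zsqrtd.norm, hq5'])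
  have hq3i : Prime (3 : GaussianInt) := by
    have := (GaussianInt.prime_iff_mod_four_eq_three_of_nat_prime 3).mpr (by norm_num)
    simpa using this
  have hq7i : Prime (7 : GaussianInt) := by
    haveI : Fact (Nat.Prime 7) := ⟨by norm_num⟩
    have := (GaussianInt.prime_iff_mod_four_eq_three_of_nat_prime 7).mpr (by norm_num)
    simpa using this
  -- congruence facts
  have hmod : ∀ (q : GaussianInt) (m : ℤ), Prime m → Zsqrtd.norm q = m ∨ Zsqrtd.norm q = m^2 →
      ∀ i i' : ℤ, q ∣ A i → q ∣ A i' → m ∣ i - i' := by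
    intro q m hm hnq i i' h1 h2
    have h3 := gi_norm_dvd (hdiff q i i' h1 h2)
    rw [Zsqrtd.norm_intCast] at h3
    have h4 : m ∣ (i - i') * (i - i') := by
      rcases hnq with he | he
      · exact he ▸ h3
      · exact (dvd_pow_self m (by norm_num : (2:ℕ) ≠ 0)).trans (he ▸ h3)
    exact (hm.dvd_mul.mp h4).elim id id
  -- choose residue classes
  have choose_class : ∀ (q : GaussianInt) (m : ℤ), Prime m →
      (Zsqrtd.norm q = m ∨ Zsqrtd.norm q = m^2) →
      ∀ n : ℕ, (m = n) → ∃ a : ZMod n, ∀ t : ℤ, q ∣ A t → (t : ZMod n) = a := by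
    intro q m hm hnq n hn
    by_cases hex : ∃ t : ℤ, q ∣ A t
    · obtain ⟨t0, ht0⟩ := hex
      refine ⟨(t0 : ZMod n), fun t ht => ?_⟩
      have := hmod q m hm hnq t t0 ht ht0
      rw [ZMod.intCast_eq_intCast_iff]
      exact (Int.modEq_iff_dvd.mpr (by rw [← hn]; exact this)).symm
    · exact ⟨0, fun t ht => absurd ⟨t, ht⟩ hex⟩
  -- compute norms
  have hn2 : Zsqrtd.norm q2 = 2 := by norm_num [Zsqrtd.norm, hq2]
  have hn5 : Zsqrtd.norm q5 = 5 := by norm_num [Zsqrtd.norm, hq5]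
  have hn5' : Zsqrtd.norm q5' = 5 := by norm_num [Zsqrtd.norm, hq5']
  have hn3 : Zsqrtd.norm (3 : GaussianInt) = 3^2 := by
    have e : (3 : GaussianInt) = ((3:ℤ) : GaussianInt) := by norm_cast
    rw [e, Zsqrtd.norm_intCast]; norm_num
  have hp2 : Prime (2:ℤ) := Int.prime_two
  have hp3 : Prime (3:ℤ) := Int.prime_three
  have hp5 : Prime (5:ℤ) := by norm_num
  obtain ⟨a, ha⟩ := choose_class q2 2 hp2 (Or.inl hn2) 2 (by norm_num)
  obtain ⟨b, hb⟩ := choose_class 3 3 hp3 (Or.inr hn3) 3 (by norm_num)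
  obtain ⟨c, hc⟩ := choose_class q5 5 hp5 (Or.inl hn5) 5 (by norm_num)
  obtain ⟨d, hd⟩ := choose_class q5' 5 hp5 (Or.inl hn5') 5 (by norm_num)
  obtain ⟨j, hjm, hg2, hg3, hg5, hg5'⟩ :=
    gi_cover (a - (k:ZMod 2)) (b - (k:ZMod 3)) (c - (k:ZMod 5)) (d - (k:ZMod 5))
  obtain ⟨j', hj'm, hne, hnc⟩ := hcon j hjm
  have hnc' : ¬ IsCoprime (A (k+j)) (A (k+j')) := hnc
  obtain ⟨p, hp, hpj, hpj'⟩ := gi_exists_prime hnc'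
  have hpd : p ∣ ((j - j' : ℤ) : GaussianInt) := by
    have h6 := hdiff p (k+j) (k+j') hpj hpj'
    have h5 : ((k+j) - (k+j') : ℤ) = j - j' := by ring
    rwa [h5] at h6
  have hdvd420 : (j - j' : ℤ) ∣ (420:ℤ) := by
    have hj1 := Finset.mem_Icc.mp hjm
    have hj2 := Finset.mem_Icc.mp hj'm
    have h0 : j - j' ≠ 0 := sub_ne_zero.mpr (fun e => hne e.symm)
    set n : ℤ := j - j' with hn
    have hb1 : -7 ≤ n := by omega
    have hb2 : n ≤ 7 := by omega
    clear_value n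
    interval_cases n <;> first | exact absurd rfl h0 | norm_num
  have hp420 : p ∣ ((420:ℤ) : GaussianInt) := hpd.trans (by exact_mod_cast hdvd420)
  have h420 : ((420:ℤ) : GaussianInt) = 2*(2*(3*(5*7))) := by norm_num
  rw [h420] at hp420
  -- helper to finish a case for modulus m
  have finish5 : ∀ (q : GaussianInt) (x : ZMod 5),
      (∀ t : ℤ, q ∣ A t → (t : ZMod 5) = x) → q ∣ p →
      ¬((j : ZMod 5) = x - (k:ZMod 5) ∧ ∃ j'' ∈ Finset.Icc (1:ℤ) 8, j'' ≠ j ∧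
        (j'' : ZMod 5) = x - (k:ZMod 5)) → False := by
    intro q x hx hqp hg
    have e1 := hx (k+j) (hqp.trans hpj)
    have e2 := hx (k+j') (hqp.trans hpj')
    push_cast at e1 e2
    exact hg ⟨by rw [← e1]; ring, j', hj'm, hne, by rw [← e2]; ring⟩
  have hdvd2 : p ∣ (2:GaussianInt) → False := by
    intro hpq
    have e2 : (2:GaussianInt) = q2 * ⟨1,-1⟩ := by
      rw [hq2, Zsqrtd.ext_iff]; simp [Zsqrtd.re_mul, Zsqrtd.im_mul]
    have hpq2 : p ∣ q2 := by
      rcases hp.dvd_mul.mp (e2 ▸ hpq) with h' | h'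
      · exact h'
      · have e3 : (⟨1,-1⟩ : GaussianInt) * ⟨0,1⟩ = q2 := by
          rw [hq2, Zsqrtd.ext_iff]; simp [Zsqrtd.re_mul, Zsqrtd.im_mul]
        exact e3 ▸ Dvd.dvd.mul_right h' _
    have hq2p : q2 ∣ p := hp.irreducible.dvd_symm hq2i hpq2
    have e1 := ha (k+j) ((hq2p.trans hpj))
    have e2' := ha (k+j') ((hq2p.trans hpj'))
    push_cast at e1 e2'
    exact hg2 ⟨by rw [← e1]; ring, j', hj'm, hne, by rw [← e2']; ring⟩
  have hdvd3 : p ∣ (3:GaussianInt) → False := by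
    intro hpq
    have hq3p : (3:GaussianInt) ∣ p := hp.irreducible.dvd_symm hq3i.irreducible hpq
    have e1 := hb (k+j) ((hq3p.trans hpj))
    have e2' := hb (k+j') ((hq3p.trans hpj'))
    push_cast at e1 e2'
    exact hg3 ⟨by rw [← e1]; ring, j', hj'm, hne, by rw [← e2']; ring⟩
  have hdvd5 : p ∣ (5:GaussianInt) → False := by
    intro hpq
    have e5 : (5:GaussianInt) = q5 * q5' := by
      rw [hq5, hq5', Zsqrtd.ext_iff]; simp [Zsqrtd.re_mul, Zsqrtd.im_mul]
    rcases hp.dvd_mul.mp (e5 ▸ hpq) with h' | h'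
    · exact finish5 q5 c hc (hp.irreducible.dvd_symm hq5i h') hg5
    · exact finish5 q5' d hd (hp.irreducible.dvd_symm hq5'i h') hg5'
  have hdvd7 : p ∣ (7:GaussianInt) → False := by
    intro hpq
    have hq7p : (7:GaussianInt) ∣ p := hp.irreducible.dvd_symm hq7i.irreducible hpq
    exact h7 (k+j) (hq7p.trans hpj)
  rcases hp.dvd_mul.mp hp420 with h' | h'
  · exact hdvd2 h'
  rcases hp.dvd_mul.mp h' with h'' | h''
  · exact hdvd2 h''
  rcases hp.dvd_mul.mp h'' with h3 | h3
  · exact hdvd3 h3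
  rcases hp.dvd_mul.mp h3 with h5 | h5
  · exact hdvd5 h5
  · exact hdvd7 h5
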